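/- Let V ⊆ ℝ^n be a regular space, P, Q ∈ V r-paths, and let P∧Q, P∨Q be the two r-path summands in a conformal primitive decomposition of P + Q. Then |P∧Q| + |P∨Q| ≤ |P| + |Q|, with strict inequality if P and Q are nonconformal. -/

import Mathlib

open Finset

variable {n : ℕ}

/-- The support of a vector. -/
def supp (x : Fin n → ℝ) : Set (Fin n) := {j | x j ≠ 0}

/-- A nonzero vector of `V` is elementary if no nonzero vector of `V` has support
properly contained in its support. -/
def IsElementary (V : Submodule ℝ (Fin n → ℝ)) (x : Fin n → ℝ) : Prop :=
  x ∈ V ∧ x ≠ 0 ∧ ∀ y ∈ V, y ≠ 0 → ¬ (supp y ⊂ supp x)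

/-- A primitive vector: elementary with entries in `{-1, 0, 1}`. -/
def IsPrimitive (V : Submodule ℝ (Fin n → ℝ)) (x : Fin n → ℝ) : Prop :=
  IsElementary V x ∧ ∀ j, x j ∈ ({-1, 0, 1} : Set ℝ)

/-- `y` conforms to `x`. -/
def Conforms (y x : Fin n → ℝ) : Prop := ∀ j, y j ≠ 0 → y j * x j > 0

/-- A regular space: the kernel of a totally unimodular matrix. -/
def IsRegularSpace (V : Submodule ℝ (Fin n → ℝ)) : Prop :=
  ∃ (m : ℕ) (A : Matrix (Fin m) (Fin n) ℝ),
    A.IsTotallyUnimodular ∧ V = LinearMap.ker A.mulVecLin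

/-- An `r`-path: a primitive vector with value `+1` at `r`. -/
def IsRPath (V : Submodule ℝ (Fin n → ℝ)) (r : Fin n) (P : Fin n → ℝ) : Prop :=
  IsPrimitive V P ∧ P r = 1

/-- Feasibility with respect to capacity `c` (no constraint at `r`). -/
def Feasible (c : Fin n → ℝ) (r : Fin n) (f : Fin n → ℝ) : Prop :=
  ∀ j, j ≠ r → 0 ≤ f j ∧ f j ≤ c j

/-- An `r`-path `P` is augmenting for the flow `f`. -/
def Augmenting (V : Submodule ℝ (Fin n → ℝ)) (c : Fin n → ℝ) (r : Fin n)
    (f P : Fin n → ℝ) : Prop :=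
  IsRPath V r P ∧ ∃ ε : ℝ, 0 < ε ∧ Feasible c r (f + ε • P)

/-- The 1-norm. -/
def onorm (x : Fin n → ℝ) : ℝ := ∑ j, |x j|

/-- A shortest augmenting `r`-path. -/
def ShortestAug (V : Submodule ℝ (Fin n → ℝ)) (c : Fin n → ℝ) (r : Fin n)
    (f P : Fin n → ℝ) : Prop :=
  Augmenting V c r f P ∧ ∀ Q, Augmenting V c r f Q → onorm P ≤ onorm Q

/-- `g` is obtained from `f` by maximal augmentation along `P`. -/
def MaxAug (c : Fin n → ℝ) (r : Fin n) (f P g : Fin n → ℝ) : Prop :=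
  ∃ ε : ℝ, 0 < ε ∧ g = f + ε • P ∧ Feasible c r g ∧
    ∀ ε' : ℝ, ε < ε' → ¬ Feasible c r (f + ε' • P)

/-- A conformal primitive decomposition of `P + Q` in which `M` and `J` are the two
`r`-path summands (`M` playing the role of `P ∧ Q` and `J` of `P ∨ Q`). -/
def MeetJoinDecomp (V : Submodule ℝ (Fin n → ℝ)) (r : Fin n)
    (P Q M J : Fin n → ℝ) : Prop :=
  ∃ (k : ℕ) (p : Fin k → Fin n → ℝ) (a b : Fin k),
    (∀ i, IsPrimitive V (p i)) ∧ (∀ i, Conforms (p i) (P + Q)) ∧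
    (∑ i, p i) = P + Q ∧ a ≠ b ∧ p a = M ∧ p b = J ∧
    p a r = 1 ∧ p b r = 1 ∧ ∀ i, p i r = 1 → i = a ∨ i = b

theorem stmt7 (V : Submodule ℝ (Fin n → ℝ)) (hV : IsRegularSpace V)
    (r : Fin n) (P Q M J : Fin n → ℝ) (hP : IsRPath V r P) (hQ : IsRPath V r Q)
    (hMJ : MeetJoinDecomp V r P Q M J) :
    onorm M + onorm J ≤ onorm P + onorm Q ∧
      ((∃ j, P j * Q j = -1) → onorm M + onorm J < onorm P + onorm Q) := by

  obtain ⟨k, p, a, b, hprim, hconf, hsum, hab, hpa, hpb, _, _, _⟩ := hMJ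
  have key : ∀ j, ∑ i, |p i j| = |(P + Q) j| := by
    intro j
    have hs : (P + Q) j = ∑ i, p i j := by
      rw [← hsum]; simp
    rcases lt_trichotomy ((P + Q) j) 0 with h | h | h
    · have hnp : ∀ i ∈ Finset.univ, p i j ≤ 0 := by
        intro i _
        by_contra hpi
        push_neg at hpi
        have := hconf i j (ne_of_gt hpi)
        nlinarith
      rw [abs_of_neg h, hs]
      rw [Finset.sum_congr rfl (fun i hi => abs_of_nonpos (hnp i hi))]
      rw [← Finset.sum_neg_distrib]
    · have hz : ∀ i, p i j = 0 := by
        intro i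
        by_contra hpi
        have := hconf i j hpi
        rw [h, mul_zero] at this
        exact lt_irrefl 0 this
      simp [hz, h]
    · have hnp : ∀ i ∈ Finset.univ, 0 ≤ p i j := by
        intro i _
        by_contra hpi
        push_neg at hpi
        have := hconf i j (ne_of_lt hpi)
        nlinarith
      rw [abs_of_pos h, hs]
      exact Finset.sum_congr rfl (fun i hi => abs_of_nonneg (hnp i hi))
  have hsum_norm : ∑ i, onorm (p i) = onorm (P + Q) := by
    unfold onorm
    rw [Finset.sum_comm]
    exact Finset.sum_congr rfl (fun j _ => key j)
  have h1 : onorm M + onorm J ≤ onorm (P + Q) := by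
    rw [← hsum_norm, ← hpa, ← hpb]
    have : onorm (p a) + onorm (p b) = ∑ i ∈ ({a, b} : Finset (Fin k)), onorm (p i) := by
      rw [Finset.sum_pair hab]
    rw [this]
    apply Finset.sum_le_sum_of_subset_of_nonneg (Finset.subset_univ _)
    intro i _ _
    exact Finset.sum_nonneg fun j _ => abs_nonneg _
  have hPQ : onorm P + onorm Q = ∑ j, (|P j| + |Q j|) := by
    unfold onorm; rw [Finset.sum_add_distrib]
  have hle : ∀ j ∈ Finset.univ, |(P + Q) j| ≤ |P j| + |Q j| := by
    intro j _
    simpa using abs_add_le (P j) (Q j)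
  constructor
  · calc onorm M + onorm J ≤ onorm (P + Q) := h1
      _ ≤ onorm P + onorm Q := by
        rw [hPQ]; exact Finset.sum_le_sum hle
  · rintro ⟨j, hj⟩
    have hPj := hP.1.2 j
    have hQj := hQ.1.2 j
    have hstrict : |(P + Q) j| < |P j| + |Q j| := by
      simp only [Set.mem_insert_iff, Set.mem_singleton_iff] at hPj hQj
      rcases hPj with h1' | h1' | h1' <;> rcases hQj with h2' | h2' | h2' <;>
        simp [h1', h2'] at hj ⊢ <;> norm_num at hj
    have h2 : onorm (P + Q) < onorm P + onorm Q := by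
      rw [hPQ]
      exact Finset.sum_lt_sum hle ⟨j, Finset.mem_univ j, hstrict⟩
    exact lt_of_le_of_lt h1 h2
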